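/- arXiv:2411.06508 — 2 statements merged into one kernel-verified Lean document; each statement's English description precedes it below -/
import Mathlib

section
/- Let A and C be independent uniform random variables on {0,...,N_A-1} and {0,...,N_C-1} with N_A ≥ N_C ≥ 1. Then H(A + C) = ln N_A + ((N_C-1)/N_A) ln N_C - (2/(N_A N_C)) Σ_{i=1}^{N_C-1} i ln i. -/
open scoped Classical
open Finset

namespace ESSL

variable {Ω : Type*} [Fintype Ω]

/-- Probability that the random variable `Y` takes the value `a`, under weights `p`. -/
noncomputable def pr {α : Type*} (p : Ω → ℝ) (Y : Ω → α) (a : α) : ℝ :=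
  ∑ ω ∈ univ.filter (fun ω => Y ω = a), p ω

/-- Shannon entropy (in nats) of a random variable `Y` on a finite space. -/
noncomputable def ent {α : Type*} (p : Ω → ℝ) (Y : Ω → α) : ℝ :=
  ∑ a ∈ univ.image Y, -(pr p Y a * Real.log (pr p Y a))

/-- Conditional entropy `H(Y | X)`. -/
noncomputable def condEnt {α β : Type*} (p : Ω → ℝ) (Y : Ω → α) (X : Ω → β) : ℝ :=
  ent p (fun ω => (Y ω, X ω)) - ent p X

/-- Mutual information `I(Y ; X)`. -/
noncomputable def mi {α β : Type*} (p : Ω → ℝ) (Y : Ω → α) (X : Ω → β) : ℝ :=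
  ent p Y - condEnt p Y X

/-- Conditional mutual information `I(A ; C | X) = H(A|X) - H(A|X,C)`. -/
noncomputable def cmi {α β γ : Type*} (p : Ω → ℝ) (A : Ω → α) (C : Ω → β) (X : Ω → γ) : ℝ :=
  condEnt p A X - condEnt p A (fun ω => (X ω, C ω))

/-- `p` is a probability mass function on `Ω`. -/
def IsProb (p : Ω → ℝ) : Prop := (∀ ω, 0 ≤ p ω) ∧ ∑ ω, p ω = 1

/-- Independence of the random variables `A` and `C`. -/
def IndepRV {α β : Type*} (p : Ω → ℝ) (A : Ω → α) (C : Ω → β) : Prop :=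
  ∀ a c, pr p (fun ω => (A ω, C ω)) (a, c) = pr p A a * pr p C c

/-- The uniform joint distribution of two independent uniform categorical variables. -/
noncomputable def unif (NA NC : ℕ) : Fin NA × Fin NC → ℝ := fun _ => ((NA : ℝ) * NC)⁻¹

/-- The first (augmentation) variable `A`, uniform on `{0,…,NA-1}`. -/
def Av {NA NC : ℕ} : Fin NA × Fin NC → ℕ := fun ω => ω.1

/-- The second (class) variable `C`, uniform on `{0,…,NC-1}`. -/
def Cv {NA NC : ℕ} : Fin NA × Fin NC → ℕ := fun ω => ω.2

lemma count_pairs (NA NC s : ℕ) :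
    (univ.filter (fun ω : Fin NA × Fin NC => (ω.1 : ℕ) + (ω.2 : ℕ) = s)).card
      = ((Finset.range NC).filter (fun c => c ≤ s ∧ s - c < NA)).card := by
  refine Finset.card_bij' (fun ω _ => (ω.2 : ℕ))
    (fun c hc => (⟨s - c, by simp [Finset.mem_filter] at hc; omega⟩,
                  ⟨c, by simp [Finset.mem_filter] at hc; omega⟩)) ?_ ?_ ?_ ?_
  · intro ω hω; simp [Finset.mem_filter] at hω ⊢; omega
  · intro c hc; simp [Finset.mem_filter] at hc ⊢; omega
  · intro ω hω; simp [Finset.mem_filter] at hω; ext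
    · simp; omega
    · simp
  · intro c hc; simp

lemma count1 (NA NC s : ℕ) (h2 : NC ≤ NA) (hs : s < NC) :
    (univ.filter (fun ω : Fin NA × Fin NC => (ω.1 : ℕ) + (ω.2 : ℕ) = s)).card = s + 1 := by
  rw [count_pairs]
  have h : ((Finset.range NC).filter (fun c => c ≤ s ∧ s - c < NA)) = Finset.range (s + 1) := by
    ext c; simp [Finset.mem_filter]; omega
  rw [h, Finset.card_range]

lemma count2 (NA NC s : ℕ) (hs1 : NC ≤ s + 1) (hs2 : s < NA) :
    (univ.filter (fun ω : Fin NA × Fin NC => (ω.1 : ℕ) + (ω.2 : ℕ) = s)).card = NC := by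
  rw [count_pairs]
  have h : ((Finset.range NC).filter (fun c => c ≤ s ∧ s - c < NA)) = Finset.range NC := by
    ext c; simp [Finset.mem_filter]; omega
  rw [h, Finset.card_range]

lemma count3 (NA NC s : ℕ) (h2 : NC ≤ NA) (hs : NA ≤ s) :
    (univ.filter (fun ω : Fin NA × Fin NC => (ω.1 : ℕ) + (ω.2 : ℕ) = s)).card
      = NA + NC - 1 - s := by
  rw [count_pairs]
  have h : ((Finset.range NC).filter (fun c => c ≤ s ∧ s - c < NA))
      = Finset.Ico (s + 1 - NA) NC := by
    ext c; simp [Finset.mem_filter]; omega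
  rw [h, Nat.card_Ico]; omega

noncomputable def gg (D : ℝ) (k : ℕ) : ℝ := -(((k:ℝ)/D) * Real.log ((k:ℝ)/D))

lemma gg_eq {D : ℝ} (hD : 0 < D) (k : ℕ) :
    gg D k = (Real.log D * k - (k:ℝ) * Real.log k) / D := by
  rcases Nat.eq_zero_or_pos k with hk | hk
  · simp [gg, hk]
  · have hk' : ((k:ℝ)) ≠ 0 := by positivity
    rw [gg, Real.log_div hk' (ne_of_gt hD)]
    field_simp
    ring

lemma gauss (m : ℕ) : (∑ s ∈ Finset.range m, ((s:ℝ)+1)) = m*(m+1)/2 := by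
  induction m with
  | zero => simp
  | succ k ih => rw [Finset.sum_range_succ, ih]; push_cast; ring


/-- For `N_A ≥ N_C ≥ 1`,
`H(A+C) = ln N_A + ((N_C-1)/N_A) ln N_C - (2/(N_A N_C)) Σ_{i=1}^{N_C-1} i ln i`. -/
theorem stmt_3 (NA NC : ℕ) (h1 : 1 ≤ NC) (h2 : NC ≤ NA) :
    ent (unif NA NC) (fun ω => Av ω + Cv ω)
      = Real.log NA + ((NC : ℝ) - 1) / NA * Real.log NC
        - 2 / ((NA : ℝ) * NC) * ∑ i ∈ Finset.Icc 1 (NC - 1), (i : ℝ) * Real.log i := by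
  have hNA : 0 < NA := lt_of_lt_of_le h1 h2
  have hD : (0:ℝ) < (NA:ℝ)*NC := by positivity
  set D : ℝ := (NA:ℝ)*NC with hDdef
  set n : ℕ → ℕ :=
    fun s => (univ.filter (fun ω : Fin NA × Fin NC => (ω.1:ℕ) + (ω.2:ℕ) = s)).card with hn
  -- Step A: entropy as a sum over range (NA+NC-1)
  have stepA : ent (unif NA NC) (fun ω => Av ω + Cv ω)
      = ∑ s ∈ Finset.range (NA + NC - 1), gg D (n s) := by
    have hpr : ∀ a : ℕ, pr (unif NA NC) (fun ω : Fin NA × Fin NC => Av ω + Cv ω) a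
        = ((n a : ℝ)) / D := by
      intro a
      rw [pr]
      simp only [hn, hDdef, unif, Av, Cv, Finset.filter_congr_decidable, Finset.sum_const,
        nsmul_eq_mul, div_eq_mul_inv]
      congr 3
      exact Finset.filter_congr_decidable _ _ _
    have hent : ent (unif NA NC) (fun ω => Av ω + Cv ω)
        = ∑ a ∈ (univ.image (fun ω : Fin NA × Fin NC => Av ω + Cv ω)), gg D (n a) := by
      rw [ent]
      refine Finset.sum_congr (by ext; simp) fun a _ => ?_
      rw [hpr a]; rfl
    rw [hent]
    refine Finset.sum_subset ?_ ?_
    · intro a ha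
      simp only [Finset.mem_image, Finset.mem_univ, true_and] at ha
      obtain ⟨ω, hω⟩ := ha
      have := ω.1.isLt; have := ω.2.isLt
      simp only [Finset.mem_range]
      simp [Av, Cv] at hω
      omega
    · intro a _ ha
      have hz : n a = 0 := by
        rw [hn]
        rw [Finset.card_eq_zero, Finset.filter_eq_empty_iff]
        intro ω _ hω
        exact ha (Finset.mem_image.mpr ⟨ω, Finset.mem_univ ω, by simp [Av, Cv, hω]⟩)
      simp [hz, gg]
  -- Step B: evaluate the sum piecewise
  have split1 : (∑ s ∈ Finset.Ico 0 (NC-1), gg D (n s))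
      + (∑ s ∈ Finset.Ico (NC-1) (NA+NC-1), gg D (n s))
      = ∑ s ∈ Finset.Ico 0 (NA+NC-1), gg D (n s) :=
    Finset.sum_Ico_consecutive _ (Nat.zero_le _) (by omega)
  have split2 : (∑ s ∈ Finset.Ico (NC-1) NA, gg D (n s))
      + (∑ s ∈ Finset.Ico NA (NA+NC-1), gg D (n s))
      = ∑ s ∈ Finset.Ico (NC-1) (NA+NC-1), gg D (n s) :=
    Finset.sum_Ico_consecutive _ (by omega) (by omega)
  have hP1 : (∑ s ∈ Finset.Ico 0 (NC-1), gg D (n s))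
      = ∑ s ∈ Finset.range (NC-1), gg D (s+1) := by
    rw [← Finset.range_eq_Ico]
    refine Finset.sum_congr rfl fun s hs => ?_
    rw [Finset.mem_range] at hs
    exact congrArg (gg D) (count1 NA NC s h2 (by omega))
  have hP2 : (∑ s ∈ Finset.Ico (NC-1) NA, gg D (n s))
      = ((NA - NC + 1 : ℕ) : ℝ) * gg D NC := by
    have e : ∑ s ∈ Finset.Ico (NC-1) NA, gg D (n s) = ∑ _s ∈ Finset.Ico (NC-1) NA, gg D NC := by
      refine Finset.sum_congr rfl fun s hs => ?_
      rw [Finset.mem_Ico] at hs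
      exact congrArg (gg D) (count2 NA NC s (by omega) (by omega))
    rw [e, Finset.sum_const, Nat.card_Ico, nsmul_eq_mul]
    have e2 : NA - (NC - 1) = NA - NC + 1 := by omega
    rw [e2]
  have hP3 : (∑ s ∈ Finset.Ico NA (NA+NC-1), gg D (n s))
      = ∑ s ∈ Finset.range (NC-1), gg D (s+1) := by
    rw [Finset.sum_Ico_eq_sum_range]
    have hlen : NA + NC - 1 - NA = NC - 1 := by omega
    rw [hlen]
    have hcong : ∀ i ∈ Finset.range (NC-1), gg D (n (NA + i)) = gg D (NC - 1 - i) := by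
      intro i hi
      rw [Finset.mem_range] at hi
      refine congrArg (gg D) ?_
      show (univ.filter (fun ω : Fin NA × Fin NC => (ω.1:ℕ) + (ω.2:ℕ) = NA + i)).card
          = NC - 1 - i
      rw [count3 NA NC (NA+i) h2 (by omega)]
      omega
    rw [Finset.sum_congr rfl hcong]
    have := Finset.sum_range_reflect (fun j => gg D (j+1)) (NC-1)
    rw [← this]
    refine Finset.sum_congr rfl fun j hj => ?_
    rw [Finset.mem_range] at hj
    congr 1
    omega
  have stepB : ∑ s ∈ Finset.range (NA + NC - 1), gg D (n s)
      = 2 * (∑ s ∈ Finset.range (NC-1), gg D (s+1)) + ((NA - NC + 1 : ℕ) : ℝ) * gg D NC := by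
    conv_lhs => rw [Finset.range_eq_Ico, ← split1, ← split2]
    rw [hP1, hP2, hP3]
    ring
  -- Step C: algebra
  have hT : (∑ i ∈ Finset.Icc 1 (NC - 1), (i : ℝ) * Real.log i)
      = ∑ s ∈ Finset.range (NC-1), ((s:ℝ)+1) * Real.log ((s:ℝ)+1) := by
    have e : Finset.Icc 1 (NC - 1) = Finset.Ico 1 NC := by
      ext x; simp only [Finset.mem_Icc, Finset.mem_Ico]; omega
    rw [e, Finset.sum_Ico_eq_sum_range]
    have e2 : NC - 1 = NC - 1 := rfl
    refine Finset.sum_congr rfl fun s _ => ?_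
    push_cast
    ring_nf
  have hsum1 : (∑ s ∈ Finset.range (NC-1), gg D (s+1))
      = (Real.log D * (((NC:ℝ)-1)*NC/2)
          - ∑ s ∈ Finset.range (NC-1), ((s:ℝ)+1) * Real.log ((s:ℝ)+1)) / D := by
    have hc : ∀ s ∈ Finset.range (NC-1), gg D (s+1)
        = (Real.log D * ((s:ℝ)+1) - ((s:ℝ)+1) * Real.log ((s:ℝ)+1)) / D := by
      intro s _
      rw [gg_eq hD]
      push_cast
      ring_nf
    rw [Finset.sum_congr rfl hc]
    rw [← Finset.sum_div]
    congr 1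
    rw [Finset.sum_sub_distrib, ← Finset.mul_sum, gauss]
    have : ((NC - 1 : ℕ) : ℝ) = (NC:ℝ) - 1 := by
      push_cast [h1]; ring
    rw [this]
    ring
  have hlogD : Real.log D = Real.log NA + Real.log NC := by
    rw [hDdef, Real.log_mul (by positivity) (by positivity)]
  have hggNC : gg D NC = (Real.log D * NC - (NC:ℝ) * Real.log NC) / D := gg_eq hD NC
  have hcast : ((NA - NC + 1 : ℕ) : ℝ) = (NA:ℝ) - NC + 1 := by
    push_cast [h2]; ring
  rw [stepA, stepB, hsum1, hggNC, hT, hcast, hlogD]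
  have hNA' : ((NA:ℝ)) ≠ 0 := by positivity
  have hNC' : ((NC:ℝ)) ≠ 0 := by positivity
  rw [hDdef]
  field_simp
  ring


end ESSL
end

section
/- Let A and C be independent uniform random variables on {0,...,N_A-1} and {0,...,N_C-1} with N_A ≥ N_C ≥ 2, and X = A + C. Then I(A;C|X) ≥ ln N_C - (1/N_A)[(N_C-1) ln N_C - ((N_C-1)²/N_C) ln(N_C-1) + (N_C-2)/2]. -/
open scoped Classical
open Finset

namespace ESSL

variable {Ω : Type*} [Fintype Ω]

/-! ### Auxiliary lemmas -/

/-- `k ↦ k log k`. -/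
noncomputable def gaux (k : ℕ) : ℝ := (k : ℝ) * Real.log k

lemma pr_comp_inj {α β : Type*} (p : Ω → ℝ) (Z : Ω → α) (F : α → β)
    (hF : Function.Injective F) (b : α) :
    pr p (fun ω => F (Z ω)) (F b) = pr p Z b := by
  unfold pr
  congr 1
  ext ω
  simp [hF.eq_iff]

lemma ent_comp_inj {α β : Type*} (p : Ω → ℝ) (Z : Ω → α) (F : α → β)
    (hF : Function.Injective F) :
    ent p (fun ω => F (Z ω)) = ent p Z := by
  unfold ent
  rw [show univ.image (fun ω => F (Z ω)) = (univ.image Z).image F by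
    rw [Finset.image_image]; rfl]
  rw [Finset.sum_image (fun a _ b _ h => hF h)]
  exact Finset.sum_congr rfl fun a _ => by rw [pr_comp_inj p Z F hF]

lemma sum_klogk : ∀ n : ℕ, 1 ≤ n →
    (n : ℝ)^2 * Real.log n - ((n : ℝ)^2 - 1)/2 ≤ 2 * ∑ k ∈ Finset.range n, gaux (k + 1) := by
  intro n hn
  induction n with
  | zero => omega
  | succ m ih =>
    rcases Nat.eq_or_lt_of_le hn with h | h
    · simp [← h, gaux]
    · have hm : 1 ≤ m := by omega
      have IH := ih hm
      rw [Finset.sum_range_succ]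
      have hmpos : (0:ℝ) < m := by exact_mod_cast hm
      have hm1 : (1:ℝ) ≤ (m:ℝ) := by exact_mod_cast hm
      have hlog : Real.log (m + 1) ≤ Real.log m + 1 / m := by
        have h1 : Real.log (((m:ℝ) + 1) / m) ≤ ((m:ℝ) + 1) / m - 1 :=
          Real.log_le_sub_one_of_pos (by positivity)
        rw [Real.log_div (by positivity) (by positivity)] at h1
        have : ((m:ℝ) + 1) / m - 1 = 1 / m := by field_simp; ring
        linarith [this ▸ h1]
      have hlogm : (0:ℝ) ≤ Real.log m := Real.log_nonneg (by exact_mod_cast hm)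
      have hg : gaux (m + 1) = ((m:ℝ) + 1) * Real.log ((m:ℝ) + 1) := by
        simp only [gaux]; push_cast; ring
      rw [hg]
      have key : ((m:ℝ)^2 - 1) * Real.log ((m:ℝ)+1) ≤ (m:ℝ)^2 * Real.log m + (m:ℝ) := by
        have h2 : (0:ℝ) ≤ (m:ℝ)^2 - 1 := by nlinarith
        have h3 := mul_le_mul_of_nonneg_left hlog h2
        have hdiv : ((m:ℝ)^2 - 1) * (1/(m:ℝ)) ≤ (m:ℝ) := by
          rw [mul_one_div, div_le_iff₀ hmpos]; nlinarith
        nlinarith [h3, hdiv, hlogm]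
      push_cast
      nlinarith [key, IH]

lemma sum_split (NA NC : ℕ) (h1 : 2 ≤ NC) (h2 : NC ≤ NA) :
    ∑ x ∈ Finset.range (NA + NC - 1), gaux (min (min (x+1) NC) (NA + NC - 1 - x))
    = 2 * (∑ k ∈ Finset.range (NC-1), gaux (k+1)) + ((NA - (NC-1) : ℕ) : ℝ) * gaux NC := by
  rw [Finset.range_eq_Ico,
    ← Finset.sum_Ico_consecutive _ (by omega : 0 ≤ NC - 1) (by omega : NC - 1 ≤ NA + NC - 1),
    ← Finset.sum_Ico_consecutive _ (by omega : NC - 1 ≤ NA) (by omega : NA ≤ NA + NC - 1)]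
  have p1 : ∑ x ∈ Finset.Ico 0 (NC-1), gaux (min (min (x+1) NC) (NA + NC - 1 - x))
      = ∑ k ∈ Finset.range (NC-1), gaux (k+1) := by
    rw [← Finset.range_eq_Ico]
    refine Finset.sum_congr rfl fun x hx => ?_
    rw [Finset.mem_range] at hx
    congr 1
    omega
  have p2 : ∑ x ∈ Finset.Ico (NC-1) NA, gaux (min (min (x+1) NC) (NA + NC - 1 - x))
      = ((NA - (NC-1) : ℕ) : ℝ) * gaux NC := by
    rw [Finset.sum_congr rfl (fun x hx => ?_), Finset.sum_const, Nat.card_Ico, nsmul_eq_mul]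
    rw [Finset.mem_Ico] at hx
    congr 1
    omega
  have p3 : ∑ x ∈ Finset.Ico NA (NA + NC - 1), gaux (min (min (x+1) NC) (NA + NC - 1 - x))
      = ∑ k ∈ Finset.range (NC-1), gaux (k+1) := by
    rw [Finset.sum_Ico_eq_sum_range]
    have hcard : NA + NC - 1 - NA = NC - 1 := by omega
    rw [hcard]
    rw [← Finset.sum_range_reflect (fun j => gaux (j+1)) (NC-1)]
    refine Finset.sum_congr rfl fun k hk => ?_
    rw [Finset.mem_range] at hk
    congr 1
    omega
  rw [p1, p2, p3, Finset.range_eq_Ico]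
  ring

lemma ent_id (NA NC : ℕ) (hA : 1 ≤ NA) (hC : 1 ≤ NC) :
    ent (unif NA NC) (fun ω => ω) = Real.log ((NA : ℝ) * NC) := by
  have hN : (0:ℝ) < (NA : ℝ) * NC := by
    have h1' : (0:ℝ) < (NA:ℝ) := by exact_mod_cast hA
    have h2' : (0:ℝ) < (NC:ℝ) := by exact_mod_cast hC
    positivity
  have hpr : ∀ a : Fin NA × Fin NC, pr (unif NA NC) (fun ω => ω) a = ((NA : ℝ) * NC)⁻¹ := by
    intro a
    unfold pr unif
    rw [Finset.sum_filter]
    simp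
  unfold ent
  simp only [Finset.image_id']
  rw [Finset.sum_congr rfl (fun a _ => by rw [hpr a])]
  rw [Finset.sum_const, nsmul_eq_mul, Finset.card_univ]
  rw [Real.log_inv]
  have hcard : (Fintype.card (Fin NA × Fin NC) : ℝ) = (NA : ℝ) * NC := by
    simp [Fintype.card_prod]
  rw [hcard]
  field_simp

lemma cnt_eq (NA NC : ℕ) (h1 : 2 ≤ NC) (h2 : NC ≤ NA) (x : ℕ)
    {D : DecidablePred (fun ω : Fin NA × Fin NC => Av ω + Cv ω = x)} :
    (@Finset.filter _ _ D univ).card = min (min (x + 1) NC) (NA + NC - 1 - x) := by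
  have hb : (@Finset.filter _ _ D univ).card
      = ((Finset.range NC).filter (fun c => c ≤ x ∧ x - c < NA)).card := by
    apply Finset.card_bij (fun ω _ => (ω.2 : ℕ))
    · rintro ⟨a, c⟩ hω
      rw [Finset.mem_filter] at hω
      simp only [mem_filter, mem_univ, true_and, Av, Cv] at hω ⊢
      simp only [mem_range]
      refine ⟨c.isLt, ?_, ?_⟩ <;> omega
    · rintro ⟨a, c⟩ ha ⟨a', c'⟩ hb h
      rw [Finset.mem_filter] at ha hb
      simp only [mem_filter, mem_univ, true_and, Av, Cv] at ha hb
      simp only at h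
      have : (a : ℕ) = a' := by omega
      ext <;> simp [h, this]
    · intro c hc
      simp only [mem_filter, mem_range] at hc
      refine ⟨(⟨x - c, hc.2.2⟩, ⟨c, hc.1⟩), ?_, rfl⟩
      rw [Finset.mem_filter]
      simp [mem_filter, Av, Cv]
      omega
  rw [hb]
  have : (Finset.range NC).filter (fun c => c ≤ x ∧ x - c < NA)
      = Finset.Icc (x + 1 - NA) (min x (NC - 1)) := by
    ext c
    simp only [mem_filter, mem_range, Finset.mem_Icc]
    omega
  rw [this, Nat.card_Icc]
  omega

set_option maxHeartbeats 2000000 in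
lemma ent_X (NA NC : ℕ) (h1 : 2 ≤ NC) (h2 : NC ≤ NA) :
    ent (unif NA NC) (fun ω : Fin NA × Fin NC => Av ω + Cv ω)
      = Real.log ((NA : ℝ) * NC)
        - ((NA : ℝ) * NC)⁻¹ *
          ∑ x ∈ Finset.range (NA + NC - 1), gaux (min (min (x + 1) NC) (NA + NC - 1 - x)) := by
  have hA : 1 ≤ NA := le_trans (by omega) h2
  have hN : (0:ℝ) < (NA : ℝ) * NC := by
    have h1' : (0:ℝ) < (NA:ℝ) := by exact_mod_cast hA
    have h2' : (0:ℝ) < (NC:ℝ) := by exact_mod_cast (by omega : 0 < NC)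
    positivity
  have hpr : ∀ x : ℕ, pr (unif NA NC) (fun ω : Fin NA × Fin NC => Av ω + Cv ω) x
      = ((min (min (x + 1) NC) (NA + NC - 1 - x) : ℕ) : ℝ) * ((NA : ℝ) * NC)⁻¹ := by
    intro x
    unfold pr unif
    rw [Finset.sum_const, cnt_eq NA NC h1 h2 x, nsmul_eq_mul]
  have himg : ∀ {D : DecidableEq ℕ},
      @Finset.image _ _ D (fun ω : Fin NA × Fin NC => Av ω + Cv ω) univ
      = Finset.range (NA + NC - 1) := by
    intro D
    ext x
    simp only [Finset.mem_image, Finset.mem_range, Finset.mem_univ, true_and]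
    constructor
    · rintro ⟨ω, rfl⟩
      have := ω.1.isLt; have := ω.2.isLt
      simp only [Av, Cv]
      omega
    · intro hx
      refine ⟨(⟨min x (NA-1), by omega⟩, ⟨x - min x (NA-1), by omega⟩), ?_⟩
      simp only [Av, Cv]
      omega
  unfold ent
  rw [himg]
  have hterm : ∀ x ∈ Finset.range (NA + NC - 1),
      -(pr (unif NA NC) (fun ω : Fin NA × Fin NC => Av ω + Cv ω) x
        * Real.log (pr (unif NA NC) (fun ω : Fin NA × Fin NC => Av ω + Cv ω) x))
      = ((min (min (x + 1) NC) (NA + NC - 1 - x) : ℕ) : ℝ) * ((NA : ℝ) * NC)⁻¹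
          * Real.log ((NA : ℝ) * NC)
        - ((NA : ℝ) * NC)⁻¹ * gaux (min (min (x + 1) NC) (NA + NC - 1 - x)) := by
    intro x hx
    rw [Finset.mem_range] at hx
    have hc : 1 ≤ min (min (x + 1) NC) (NA + NC - 1 - x) := by omega
    have hc' : (0:ℝ) < ((min (min (x + 1) NC) (NA + NC - 1 - x) : ℕ) : ℝ) := by
      exact_mod_cast hc
    rw [hpr x, Real.log_mul (ne_of_gt hc') (inv_ne_zero (ne_of_gt hN)), Real.log_inv]
    unfold gaux
    ring
  rw [Finset.sum_congr rfl hterm, Finset.sum_sub_distrib, ← Finset.sum_mul, ← Finset.mul_sum,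
    ← Finset.sum_mul]
  have hsum : ∑ x ∈ Finset.range (NA + NC - 1),
      ((min (min (x + 1) NC) (NA + NC - 1 - x) : ℕ) : ℝ) = (NA : ℝ) * NC := by
    have hcard := Finset.card_eq_sum_card_fiberwise
      (f := fun ω : Fin NA × Fin NC => Av ω + Cv ω) (s := univ)
      (t := Finset.range (NA + NC - 1))
      (fun ω _ => by
        have := ω.1.isLt; have := ω.2.isLt
        simp only [Finset.mem_range, Finset.coe_range, Set.mem_Iio, Av, Cv]
        omega)
    have : ∀ x ∈ Finset.range (NA + NC - 1),
        ((univ.filter (fun ω : Fin NA × Fin NC => Av ω + Cv ω = x)).card : ℝ)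
        = ((min (min (x + 1) NC) (NA + NC - 1 - x) : ℕ) : ℝ) := by
      intro x _
      rw [cnt_eq NA NC h1 h2 x]
    rw [← Finset.sum_congr rfl this, ← Nat.cast_sum, ← hcard]
    simp [Fintype.card_prod]
  rw [hsum]
  field_simp

/-- For `N_A ≥ N_C ≥ 2` and `X = A + C`,
`I(A;C|X) ≥ ln N_C - (1/N_A)[(N_C-1) ln N_C - ((N_C-1)²/N_C) ln(N_C-1) + (N_C-2)/2]`. -/
theorem stmt_5 (NA NC : ℕ) (h1 : 2 ≤ NC) (h2 : NC ≤ NA) :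
    Real.log NC - 1 / (NA : ℝ) *
        (((NC : ℝ) - 1) * Real.log NC - ((NC : ℝ) - 1) ^ 2 / NC * Real.log ((NC : ℝ) - 1)
          + ((NC : ℝ) - 2) / 2)
      ≤ cmi (unif NA NC) Av Cv (fun ω => Av ω + Cv ω) := by
  have hA : 1 ≤ NA := le_trans (by omega) h2
  have hNA : (0:ℝ) < (NA:ℝ) := by exact_mod_cast hA
  have hNC : (0:ℝ) < (NC:ℝ) := by exact_mod_cast (by omega : 0 < NC)
  have hN : (0:ℝ) < (NA : ℝ) * NC := by positivity
  -- reduce cmi to an explicit sum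
  have e1 : ent (unif NA NC)
      (fun ω : Fin NA × Fin NC => (Av ω, ((fun ω => Av ω + Cv ω) ω, Cv ω)))
      = ent (unif NA NC) (fun ω : Fin NA × Fin NC => (Av ω + Cv ω, Cv ω)) := by
    have hinj : Function.Injective (fun q : ℕ × ℕ => (q.1 - q.2, q)) :=
      fun a b h => congrArg Prod.snd h
    have h2 := ent_comp_inj (unif NA NC) (fun ω : Fin NA × Fin NC => (Av ω + Cv ω, Cv ω))
        (fun q : ℕ × ℕ => (q.1 - q.2, q)) hinj
    have hfun : (fun ω : Fin NA × Fin NC => (Av ω, ((fun ω => Av ω + Cv ω) ω, Cv ω)))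
        = fun ω => ((fun q : ℕ × ℕ => (q.1 - q.2, q)) ((fun ω : Fin NA × Fin NC => (Av ω + Cv ω, Cv ω)) ω)) := by
      funext ω
      simp [Av, Cv]
    rw [hfun]
    exact h2
  have e2 : ent (unif NA NC)
      (fun ω : Fin NA × Fin NC => (Av ω, (fun ω : Fin NA × Fin NC => Av ω + Cv ω) ω))
      = ent (unif NA NC) (fun ω : Fin NA × Fin NC => ω) := by
    have hinj : Function.Injective
        (fun ω' : Fin NA × Fin NC => ((ω'.1 : ℕ), (ω'.1 : ℕ) + (ω'.2 : ℕ))) := by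
      rintro ⟨a, c⟩ ⟨a', c'⟩ h
      simp only [Prod.mk.injEq] at h
      obtain ⟨ha, hs⟩ := h
      have hc : (c : ℕ) = (c' : ℕ) := by omega
      simp only [Prod.mk.injEq]
      exact ⟨Fin.ext ha, Fin.ext hc⟩
    have h2 := ent_comp_inj (unif NA NC) (fun ω : Fin NA × Fin NC => ω)
        (fun ω' : Fin NA × Fin NC => ((ω'.1 : ℕ), (ω'.1 : ℕ) + (ω'.2 : ℕ))) hinj
    have hfun : (fun ω : Fin NA × Fin NC => (Av ω, (fun ω : Fin NA × Fin NC => Av ω + Cv ω) ω))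
        = fun ω => ((fun ω' : Fin NA × Fin NC => ((ω'.1 : ℕ), (ω'.1 : ℕ) + (ω'.2 : ℕ)))
            ((fun ω : Fin NA × Fin NC => ω) ω)) := by
      funext ω
      simp [Av, Cv]
    rw [hfun]
    exact h2
  have hcmi : cmi (unif NA NC) Av Cv (fun ω => Av ω + Cv ω)
      = ((NA : ℝ) * NC)⁻¹ *
          ∑ x ∈ Finset.range (NA + NC - 1), gaux (min (min (x + 1) NC) (NA + NC - 1 - x)) := by
    unfold cmi condEnt
    rw [e1, e2, ent_id NA NC hA (by omega), ent_X NA NC h1 h2]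
    ring
  rw [hcmi, sum_split NA NC h1 h2]
  -- the combinatorial lower bound
  have hS := sum_klogk (NC - 1) (by omega)
  have hcast : ((NC - 1 : ℕ) : ℝ) = (NC : ℝ) - 1 := by
    rw [Nat.cast_sub (by omega)]; simp
  rw [hcast] at hS
  have hcast2 : ((NA - (NC - 1) : ℕ) : ℝ) = (NA : ℝ) - NC + 1 := by
    rw [Nat.cast_sub (by omega)]; rw [Nat.cast_sub (by omega)]; push_cast; ring
  rw [hcast2]
  have key : Real.log NC - 1 / (NA : ℝ) *
        (((NC : ℝ) - 1) * Real.log NC - ((NC : ℝ) - 1) ^ 2 / NC * Real.log ((NC : ℝ) - 1)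
          + ((NC : ℝ) - 2) / 2)
      = ((NA : ℝ) * NC)⁻¹ *
          ((((NC:ℝ) - 1)^2 * Real.log ((NC:ℝ) - 1) - (((NC:ℝ) - 1)^2 - 1)/2)
            + ((NA : ℝ) - NC + 1) * gaux NC) := by
    unfold gaux
    field_simp
    ring
  rw [key]
  apply mul_le_mul_of_nonneg_left _ (le_of_lt (inv_pos.mpr hN))
  linarith [hS]

end ESSL
end
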